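/- Suppose φ : ℝ≥0^n → ℝ≥0^n is continuous, monotone, and scalable (α > 1 ⇒ αφ(ρ) > φ(αρ)), and suppose there exists z ≥ 0 with φ(z) ≤ z (a feasible point). Then φ has a fixed point ρ* with 0 ≤ ρ* ≤ z, and the iteration from ρ^(0) = 0 converges monotonically upward to ρ*. -/

import Mathlib

theorem stmt17 {n : ℕ} (φ : (Fin n → NNReal) → (Fin n → NNReal))
    (hcont : Continuous φ) (hmono : Monotone φ)
    (hscale : ∀ α : NNReal, 1 < α → ∀ ρ i, φ (α • ρ) i < α * φ ρ i)
    (z : Fin n → NNReal) (hz : φ z ≤ z) :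
    ∃ ρs : Fin n → NNReal, φ ρs = ρs ∧ ρs ≤ z ∧
      Monotone (fun k : ℕ => φ^[k] 0) ∧
      Filter.Tendsto (fun k : ℕ => φ^[k] 0) Filter.atTop (nhds ρs) := by
  have hb : ∀ k, φ^[k] 0 ≤ z := by
    intro k
    induction k with
    | zero => intro i; exact zero_le
    | succ k ih =>
        rw [Function.iterate_succ_apply']
        exact le_trans (hmono ih) hz
  have hmonoseq : Monotone (fun k : ℕ => φ^[k] 0) := by
    apply monotone_nat_of_le_succ
    intro k
    induction k with
    | zero => intro i; exact zero_le
    | succ k ih =>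
        rw [Function.iterate_succ_apply', Function.iterate_succ_apply']
        exact hmono ih
  set ρs : Fin n → NNReal := fun i => ⨆ k, φ^[k] 0 i with hρs
  have hbdd : ∀ i, BddAbove (Set.range fun k : ℕ => φ^[k] 0 i) := by
    intro i
    exact ⟨z i, by rintro x ⟨k, rfl⟩; exact hb k i⟩
  have htend : Filter.Tendsto (fun k : ℕ => φ^[k] 0) Filter.atTop (nhds ρs) := by
    rw [tendsto_pi_nhds]
    intro i
    exact tendsto_atTop_ciSup (fun a b hab => hmonoseq hab i) (hbdd i)
  have hle : ρs ≤ z := fun i => ciSup_le fun k => hb k i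
  refine ⟨ρs, ?_, hle, hmonoseq, htend⟩
  have h1 : Filter.Tendsto (fun k : ℕ => φ^[k + 1] 0) Filter.atTop (nhds ρs) :=
    htend.comp (Filter.tendsto_add_atTop_nat 1)
  have h2 : Filter.Tendsto (fun k : ℕ => φ^[k + 1] 0) Filter.atTop (nhds (φ ρs)) := by
    simp only [Function.iterate_succ_apply']
    exact (hcont.tendsto ρs).comp htend
  exact tendsto_nhds_unique h2 h1
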